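/- Let D be a bivariate copula. Then the Markov product D∗D defined by (D∗D)(u,v) = ∫₀¹ ∂₁D(t,u) ∂₁D(t,v) dt is itself a bivariate copula. -/

import Mathlib

open Set MeasureTheory

/-- A bivariate copula on `[0,1]²`. -/
structure IsCopula (C : ℝ → ℝ → ℝ) : Prop where
  grounded₁ : ∀ u ∈ Icc (0:ℝ) 1, C u 0 = 0
  grounded₂ : ∀ v ∈ Icc (0:ℝ) 1, C 0 v = 0
  margin₁ : ∀ u ∈ Icc (0:ℝ) 1, C u 1 = u
  margin₂ : ∀ v ∈ Icc (0:ℝ) 1, C 1 v = v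
  twoIncreasing : ∀ u₁ u₂ v₁ v₂ : ℝ, u₁ ∈ Icc (0:ℝ) 1 → u₂ ∈ Icc (0:ℝ) 1 →
    v₁ ∈ Icc (0:ℝ) 1 → v₂ ∈ Icc (0:ℝ) 1 → u₁ ≤ u₂ → v₁ ≤ v₂ →
    C u₂ v₁ + C u₁ v₂ ≤ C u₂ v₂ + C u₁ v₁

/-- `d` is a version of the first partial derivative `∂₁ D` of the copula `D`:
it is measurable in `t`, takes values in `[0,1]` almost everywhere on `(0,1)`,
and `D u v = ∫₀ᵘ d(t,v) dt`. -/
structure IsPartialDeriv₁ (D : ℝ → ℝ → ℝ) (d : ℝ → ℝ → ℝ) : Prop where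
  meas : ∀ v ∈ Icc (0:ℝ) 1,
    AEStronglyMeasurable (fun t => d t v) (volume.restrict (Ioo (0:ℝ) 1))
  mem_Icc : ∀ v ∈ Icc (0:ℝ) 1,
    ∀ᵐ t ∂(volume.restrict (Ioo (0:ℝ) 1)), d t v ∈ Icc (0:ℝ) 1
  integral_rep : ∀ v ∈ Icc (0:ℝ) 1, ∀ u ∈ Icc (0:ℝ) 1,
    D u v = ∫ t in (0:ℝ)..u, d t v

/-- If an integrable function on `(0,1)` has nonnegative integral over every
subinterval, then it is nonnegative almost everywhere. -/
lemma aux_ae_nonneg (f : ℝ → ℝ) (hf : IntegrableOn f (Ioo (0:ℝ) 1))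
    (h : ∀ a b : ℝ, 0 ≤ a → a ≤ b → b ≤ 1 → 0 ≤ ∫ t in Ioo a b, f t) :
    ∀ᵐ t ∂(volume.restrict (Ioo (0:ℝ) 1)), 0 ≤ f t := by
  set g := (Ioo (0:ℝ) 1).indicator f with hgdef
  have hg : Integrable g := (integrable_indicator_iff measurableSet_Ioo).2 hf
  have hIcc : ∀ x y : ℝ, 0 ≤ ∫ t in Icc x y, g t := by
    intro x y
    rw [← Measure.restrict_congr_set Ioo_ae_eq_Icc,
      hgdef, setIntegral_indicator measurableSet_Ioo, Ioo_inter_Ioo]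
    rcases le_or_gt (x ⊔ 0) (y ⊓ 1) with hle | hlt
    · exact h _ _ (le_max_right _ _) hle (min_le_right _ _)
    · rw [Ioo_eq_empty (by exact fun h' => absurd h' (not_lt_of_gt hlt))]
      simp
  have key : ∀ᵐ x : ℝ, 0 ≤ g x := by
    filter_upwards [(IsUnifLocDoublingMeasure.vitaliFamily (volume : Measure ℝ)
        1).ae_tendsto_average hg.locallyIntegrable] with x hx
    have hx' := hx.comp (Real.tendsto_Icc_vitaliFamily_right x)
    refine ge_of_tendsto hx' ?_
    filter_upwards [self_mem_nhdsWithin] with y _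
    simp only [Function.comp_apply]
    rw [setAverage_eq, smul_eq_mul]
    exact mul_nonneg (inv_nonneg.2 ENNReal.toReal_nonneg) (hIcc x y)
  filter_upwards [ae_restrict_of_ae key, ae_restrict_mem measurableSet_Ioo] with t h1 h2
  rwa [hgdef, indicator_of_mem h2] at h1

/-- The Markov product `D ∗ D` of a copula `D` with itself is again a copula. -/
theorem markov_product_isCopula (D : ℝ → ℝ → ℝ) (d : ℝ → ℝ → ℝ)
    (hD : IsCopula D) (hd : IsPartialDeriv₁ D d) :
    IsCopula (fun u v => ∫ t in (0:ℝ)..1, d t u * d t v) := by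
  have h01 : (0:ℝ) ∈ Icc (0:ℝ) 1 := ⟨le_refl _, zero_le_one⟩
  have h11 : (1:ℝ) ∈ Icc (0:ℝ) 1 := ⟨zero_le_one, le_refl _⟩
  -- integrability of d(·, v)
  have hint : ∀ v ∈ Icc (0:ℝ) 1, IntegrableOn (fun t => d t v) (Ioo (0:ℝ) 1) := by
    intro v hv
    refine Integrable.mono' (g := fun _ => (1:ℝ))
      (integrableOn_const measure_Ioo_lt_top.ne) (hd.meas v hv) ?_
    filter_upwards [hd.mem_Icc v hv] with t ht
    rw [Real.norm_eq_abs, abs_of_nonneg ht.1]; exact ht.2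
  -- integrability of products
  have hintmul : ∀ u ∈ Icc (0:ℝ) 1, ∀ v ∈ Icc (0:ℝ) 1,
      IntegrableOn (fun t => d t u * d t v) (Ioo (0:ℝ) 1) := by
    intro u hu v hv
    refine Integrable.mono' (g := fun _ => (1:ℝ))
      (integrableOn_const measure_Ioo_lt_top.ne)
      ((hd.meas u hu).mul (hd.meas v hv)) ?_
    filter_upwards [hd.mem_Icc u hu, hd.mem_Icc v hv] with t h1 h2
    rw [Real.norm_eq_abs, abs_mul, abs_of_nonneg h1.1, abs_of_nonneg h2.1]
    exact mul_le_one₀ h1.2 h2.1 h2.2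
  -- interval integrability
  have hii : ∀ v ∈ Icc (0:ℝ) 1, ∀ a b : ℝ, a ∈ Icc (0:ℝ) 1 → b ∈ Icc (0:ℝ) 1 →
      IntervalIntegrable (fun t => d t v) volume a b := by
    intro v hv a b ha hb
    rcases le_total a b with hab | hab
    · rw [intervalIntegrable_iff_integrableOn_Ioc_of_le hab, IntegrableOn,
        ← Measure.restrict_congr_set Ioo_ae_eq_Ioc]
      exact (hint v hv).mono_set (Ioo_subset_Ioo ha.1 hb.2)
    · refine IntervalIntegrable.symm ?_
      rw [intervalIntegrable_iff_integrableOn_Ioc_of_le hab, IntegrableOn,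
        ← Measure.restrict_congr_set Ioo_ae_eq_Ioc]
      exact (hint v hv).mono_set (Ioo_subset_Ioo hb.1 ha.2)
  -- set integral over Ioo a b equals D b v - D a v
  have hDdiff : ∀ v ∈ Icc (0:ℝ) 1, ∀ a b : ℝ, 0 ≤ a → a ≤ b → b ≤ 1 →
      ∫ t in Ioo a b, d t v = D b v - D a v := by
    intro v hv a b ha hab hb
    have ha' : a ∈ Icc (0:ℝ) 1 := ⟨ha, hab.trans hb⟩
    have hb' : b ∈ Icc (0:ℝ) 1 := ⟨ha.trans hab, hb⟩
    rw [hd.integral_rep v hv a ha', hd.integral_rep v hv b hb']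
    have hsplit := intervalIntegral.integral_add_adjacent_intervals
      (hii v hv 0 a h01 ha') (hii v hv a b ha' hb')
    rw [← hsplit, intervalIntegral.integral_of_le hab, integral_Ioc_eq_integral_Ioo]
    ring
  -- interval integral 0..1 equals set integral over Ioo 0 1
  have h01int : ∀ f : ℝ → ℝ, ∫ t in (0:ℝ)..1, f t = ∫ t in Ioo (0:ℝ) 1, f t := by
    intro f
    rw [intervalIntegral.integral_of_le zero_le_one, integral_Ioc_eq_integral_Ioo]
  -- full integral equals D 1 v
  have hfull : ∀ v ∈ Icc (0:ℝ) 1, ∫ t in Ioo (0:ℝ) 1, d t v = D 1 v := by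
    intro v hv
    rw [hd.integral_rep v hv 1 h11, h01int]
  -- d(·,0) = 0 a.e.
  have hzero : ∀ᵐ t ∂(volume.restrict (Ioo (0:ℝ) 1)), d t 0 = 0 := by
    have h0 : ∫ t in Ioo (0:ℝ) 1, d t 0 = 0 := by
      rw [hfull 0 h01, hD.grounded₁ 1 h11]
    have hnn : 0 ≤ᵐ[volume.restrict (Ioo (0:ℝ) 1)] fun t => d t 0 := by
      filter_upwards [hd.mem_Icc 0 h01] with t ht using ht.1
    exact (integral_eq_zero_iff_of_nonneg_ae hnn (hint 0 h01)).1 h0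
  -- d(·,1) = 1 a.e.
  have hone : ∀ᵐ t ∂(volume.restrict (Ioo (0:ℝ) 1)), d t 1 = 1 := by
    have hmeas1 : (volume.restrict (Ioo (0:ℝ) 1)) (Set.univ) ≠ ⊤ := by
      rw [Measure.restrict_apply_univ]; exact measure_Ioo_lt_top.ne
    have hi1 : Integrable (fun t => 1 - d t 1) (volume.restrict (Ioo (0:ℝ) 1)) :=
      (integrableOn_const measure_Ioo_lt_top.ne).sub (hint 1 h11)
    have h0 : ∫ t in Ioo (0:ℝ) 1, (1 - d t 1) = 0 := by
      rw [integral_sub (integrableOn_const (C := (1:ℝ)) measure_Ioo_lt_top.ne) (hint 1 h11),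
        hfull 1 h11, hD.margin₁ 1 h11, setIntegral_const, Real.volume_real_Ioo]
      norm_num
    have hnn : 0 ≤ᵐ[volume.restrict (Ioo (0:ℝ) 1)] fun t => 1 - d t 1 := by
      filter_upwards [hd.mem_Icc 1 h11] with t ht
      show (0:ℝ) ≤ 1 - d t 1
      linarith [ht.2]
    have := (integral_eq_zero_iff_of_nonneg_ae hnn hi1).1 h0
    filter_upwards [this] with t ht
    have : 1 - d t 1 = 0 := ht
    linarith
  -- a.e. monotonicity in the second argument
  have hmono : ∀ v₁ ∈ Icc (0:ℝ) 1, ∀ v₂ ∈ Icc (0:ℝ) 1, v₁ ≤ v₂ →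
      ∀ᵐ t ∂(volume.restrict (Ioo (0:ℝ) 1)), d t v₁ ≤ d t v₂ := by
    intro v₁ hv₁ v₂ hv₂ hv
    have hae := aux_ae_nonneg (fun t => d t v₂ - d t v₁)
      ((hint v₂ hv₂).sub (hint v₁ hv₁)) ?_
    · filter_upwards [hae] with t ht; linarith
    · intro a b ha hab hb
      have ha' : a ∈ Icc (0:ℝ) 1 := ⟨ha, hab.trans hb⟩
      have hb' : b ∈ Icc (0:ℝ) 1 := ⟨ha.trans hab, hb⟩
      have hsub : ∫ t in Ioo a b, (d t v₂ - d t v₁) =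
          (D b v₂ - D a v₂) - (D b v₁ - D a v₁) := by
        rw [integral_sub
          (((hint v₂ hv₂).mono_set (Ioo_subset_Ioo ha hb)))
          (((hint v₁ hv₁).mono_set (Ioo_subset_Ioo ha hb))),
          hDdiff v₂ hv₂ a b ha hab hb, hDdiff v₁ hv₁ a b ha hab hb]
      rw [hsub]
      have := hD.twoIncreasing a b v₁ v₂ ha' hb' hv₁ hv₂ hab hv
      linarith
  constructor
  · -- grounded₁
    intro u hu
    show ∫ t in (0:ℝ)..1, d t u * d t 0 = 0
    rw [h01int]
    rw [MeasureTheory.integral_eq_zero_iff_of_nonneg_ae ?_ ?_]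
    · filter_upwards [hzero, hd.mem_Icc u hu] with t h1 h2
      simp [h1]
    · filter_upwards [hzero, hd.mem_Icc u hu] with t h1 h2
      simp [h1]
    · exact hintmul u hu 0 h01
  · -- grounded₂
    intro v hv
    show ∫ t in (0:ℝ)..1, d t 0 * d t v = 0
    rw [h01int]
    rw [MeasureTheory.integral_eq_zero_iff_of_nonneg_ae ?_ ?_]
    · filter_upwards [hzero, hd.mem_Icc v hv] with t h1 h2
      simp [h1]
    · filter_upwards [hzero, hd.mem_Icc v hv] with t h1 h2
      simp [h1]
    · exact hintmul 0 h01 v hv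
  · -- margin₁
    intro u hu
    show ∫ t in (0:ℝ)..1, d t u * d t 1 = u
    rw [h01int]
    have : ∫ t in Ioo (0:ℝ) 1, d t u * d t 1 = ∫ t in Ioo (0:ℝ) 1, d t u := by
      refine integral_congr_ae ?_
      filter_upwards [hone] with t ht
      rw [ht, mul_one]
    rw [this, hfull u hu, hD.margin₂ u hu]
  · -- margin₂
    intro v hv
    show ∫ t in (0:ℝ)..1, d t 1 * d t v = v
    rw [h01int]
    have : ∫ t in Ioo (0:ℝ) 1, d t 1 * d t v = ∫ t in Ioo (0:ℝ) 1, d t v := by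
      refine integral_congr_ae ?_
      filter_upwards [hone] with t ht
      rw [ht, one_mul]
    rw [this, hfull v hv, hD.margin₂ v hv]
  · -- two-increasing
    intro u₁ u₂ v₁ v₂ hu₁ hu₂ hv₁ hv₂ hu hv
    show (∫ t in (0:ℝ)..1, d t u₂ * d t v₁) + (∫ t in (0:ℝ)..1, d t u₁ * d t v₂) ≤
      (∫ t in (0:ℝ)..1, d t u₂ * d t v₂) + (∫ t in (0:ℝ)..1, d t u₁ * d t v₁)
    rw [h01int, h01int, h01int, h01int]
    have hkey : 0 ≤ ∫ t in Ioo (0:ℝ) 1, (d t u₂ - d t u₁) * (d t v₂ - d t v₁) := by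
      refine integral_nonneg_of_ae ?_
      filter_upwards [hmono u₁ hu₁ u₂ hu₂ hu, hmono v₁ hv₁ v₂ hv₂ hv] with t h1 h2
      exact mul_nonneg (by linarith) (by linarith)
    have hexp : ∫ t in Ioo (0:ℝ) 1, (d t u₂ - d t u₁) * (d t v₂ - d t v₁) =
        (∫ t in Ioo (0:ℝ) 1, d t u₂ * d t v₂) - (∫ t in Ioo (0:ℝ) 1, d t u₂ * d t v₁)
        - (∫ t in Ioo (0:ℝ) 1, d t u₁ * d t v₂) + ∫ t in Ioo (0:ℝ) 1, d t u₁ * d t v₁ := by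
      have e1 := hintmul u₂ hu₂ v₂ hv₂
      have e2 := hintmul u₂ hu₂ v₁ hv₁
      have e3 := hintmul u₁ hu₁ v₂ hv₂
      have e4 := hintmul u₁ hu₁ v₁ hv₁
      have : (fun t => (d t u₂ - d t u₁) * (d t v₂ - d t v₁)) =
          fun t => d t u₂ * d t v₂ - d t u₂ * d t v₁ - d t u₁ * d t v₂ + d t u₁ * d t v₁ := by
        funext t; ring
      have i2 : Integrable (fun t => d t u₂ * d t v₂ - d t u₂ * d t v₁)
          (volume.restrict (Ioo (0:ℝ) 1)) := e1.sub e2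
      have i3 : Integrable (fun t => d t u₂ * d t v₂ - d t u₂ * d t v₁ - d t u₁ * d t v₂)
          (volume.restrict (Ioo (0:ℝ) 1)) := i2.sub e3
      rw [this, integral_add i3 e4, integral_sub i2 e3, integral_sub e1 e2]
    rw [hexp] at hkey
    linarith
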